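/- Let $t\geq 3$ and let $g_r \in \mathbb{Z}_2[w_2,w_3,w_4]$ satisfy the recurrence $g_r = w_2 g_{r-2} + w_3 g_{r-3} + w_4 g_{r-4}$ with $g_0=1$, $g_{-1}=g_{-2}=g_{-3}=0$. With respect to the lexicographic monomial ordering with $w_3 < w_2 < w_4$, the leading monomial of $g_{2^t-3+2^i}$ equals $w_2^{2^{t-1}-2^i} w_3^{2^i-1}$ for every $0\leq i\leq t-1$. -/
import Mathlib

open MvPolynomial

namespace Stmt11

/-- the multinomial coefficient (a+b+c)!/(a!b!c!) -/
def mlt (a b c : ℕ) : ℕ := (a+b+c).choose a * (b+c).choose b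


/-- bit `j` of `n` -/
def bit (j n : ℕ) : ℕ := n / 2 ^ j % 2

lemma bit_zero (n : ℕ) : bit 0 n = n % 2 := by simp [bit]

lemma bit_succ (j n : ℕ) : bit (j+1) n = bit j (n / 2) := by
  simp [bit, pow_succ, Nat.div_div_eq_div_mul, mul_comm]

lemma bit_zero_nat (j : ℕ) : bit j 0 = 0 := by simp [bit]

def Dis (a b : ℕ) : Prop := ∀ j, bit j a = 0 ∨ bit j b = 0
def Sub (a b : ℕ) : Prop := ∀ j, bit j a ≤ bit j b

lemma Dis.div2 {a b : ℕ} (h : Dis a b) : Dis (a/2) (b/2) := fun j => by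
  rw [← bit_succ, ← bit_succ]; exact h (j+1)

lemma Sub.div2 {a b : ℕ} (h : Sub a b) : Sub (a/2) (b/2) := fun j => by
  rw [← bit_succ, ← bit_succ]; exact h (j+1)

lemma bit_add_of_dis : ∀ j {a b : ℕ}, Dis a b → bit j (a + b) = bit j a + bit j b := by
  intro j
  induction j with
  | zero =>
    intro a b h
    have := h 0
    simp only [bit_zero] at *
    omega
  | succ j ih =>
    intro a b h
    have h0 := h 0
    simp only [bit_zero] at h0
    have hdiv : (a + b) / 2 = a / 2 + b / 2 := by omega
    rw [bit_succ, bit_succ, bit_succ, hdiv]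
    exact ih h.div2

lemma choose_odd_dis : ∀ m a b : ℕ, a + b = m → (a+b).choose a % 2 = 1 → Dis a b := by
  intro m
  induction m using Nat.strong_induction_on with
  | _ m ih =>
    intro a b hab h
    rcases Nat.eq_zero_or_pos m with hm | hm
    · have ha : a = 0 := by omega
      have hb : b = 0 := by omega
      subst ha; subst hb
      intro j; left; exact bit_zero_nat j
    have key := Choose.choose_modEq_choose_mod_mul_choose_div_nat (p := 2) (n := a+b) (k := a)
    rw [Nat.ModEq] at key
    by_cases hpar : a % 2 = 1 ∧ b % 2 = 1
    · exfalso
      have h1 : (a+b) % 2 = 0 := by omega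
      rw [h1, hpar.1] at key
      simp [Nat.choose] at key
      omega
    · have h2 : (a+b)/2 = a/2 + b/2 := by omega
      have h1 : Nat.choose ((a+b)%2) (a%2) = 1 := by
        have ha2 := Nat.mod_two_eq_zero_or_one a
        have hb2 := Nat.mod_two_eq_zero_or_one b
        have hab2 : (a+b) % 2 = (a % 2 + b % 2) % 2 := Nat.add_mod a b 2
        rcases ha2 with h' | h' <;> rcases hb2 with h'' | h'' <;>
          simp_all <;> omega
      rw [h1, one_mul, h2] at key
      have hrec : Nat.choose (a/2 + b/2) (a/2) % 2 = 1 := by omega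
      have hlt : a/2 + b/2 < m := by omega
      have hdis := ih _ hlt (a/2) (b/2) rfl hrec
      intro j
      cases j with
      | zero => simp only [bit_zero]; omega
      | succ j => rw [bit_succ, bit_succ]; exact hdis j

lemma choose_two_pow_sub_one : ∀ m k : ℕ, k < 2^m → (2^m - 1).choose k % 2 = 1 := by
  intro m
  induction m with
  | zero => intro k hk; interval_cases k; decide
  | succ m ih =>
    intro k hk
    have h2 : (2:ℕ)^(m+1) = 2 * 2^m := by ring
    have hp : (1:ℕ) ≤ 2^m := Nat.one_le_two_pow
    have key := Choose.choose_modEq_choose_mod_mul_choose_div_nat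
      (p := 2) (n := 2^(m+1)-1) (k := k)
    rw [Nat.ModEq] at key
    have e1 : (2^(m+1)-1) % 2 = 1 := by omega
    have e2 : (2^(m+1)-1) / 2 = 2^m - 1 := by omega
    rw [e1, e2] at key
    have e3 : Nat.choose 1 (k % 2) = 1 := by
      have := Nat.mod_two_eq_zero_or_one k
      rcases this with h | h <;> rw [h] <;> decide
    rw [e3, one_mul] at key
    have := ih (k/2) (by omega)
    omega

lemma odd_of_mul_odd {x y : ℕ} (h : x * y % 2 = 1) : x % 2 = 1 ∧ y % 2 = 1 := by
  have hm := Nat.mul_mod x y 2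
  have hx := Nat.mod_two_eq_zero_or_one x
  have hy := Nat.mod_two_eq_zero_or_one y
  rcases hx with h' | h' <;> rcases hy with h'' | h'' <;> rw [h', h''] at hm <;> omega

/-- no solutions to `2s+b+2c = 2^u - 3` -/
lemma lemN : ∀ u, 2 ≤ u → ∀ s b c : ℕ, Sub b s → Sub c s → Dis b c →
    2*s + b + 2*c ≠ 2^u - 3 := by
  intro u
  induction u with
  | zero => omega
  | succ u ih =>
    intro hu s b c hbs hcs hbc heq
    have h2 : (2:ℕ)^(u+1) = 2 * 2^u := by ring
    rcases Nat.lt_or_ge u 2 with hu2 | hu2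
    · -- u + 1 = 2
      have hu1 : u = 1 := by omega
      subst hu1
      have hb : b % 2 = 1 := by omega
      have hs : s % 2 = 1 := by have := hbs 0; simp only [bit_zero] at this; omega
      omega
    · have hp : (4:ℕ) ≤ 2^u := by
        calc (4:ℕ) = 2^2 := by norm_num
        _ ≤ 2^u := Nat.pow_le_pow_right (by norm_num) hu2
      have hb : b % 2 = 1 := by omega
      have hs : s % 2 = 1 := by have := hbs 0; simp only [bit_zero] at this; omega
      have hc : c % 2 = 0 := by have := hbc 0; simp only [bit_zero] at this; omega
      refine ih hu2 (s/2) (b/2) (c/2) hbs.div2 hcs.div2 hbc.div2 ?_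
      omega

/-- combined K and L claims -/
lemma lemKL : ∀ t, 1 ≤ t →
    (∀ s b c : ℕ, Sub b s → Sub c s → Dis b c →
      2*s + b + 2*c = 2^t - 2 → c = 0 ∧ s < 2^(t-1)) ∧
    (∀ s b c : ℕ, Sub b s → Sub c s → Dis b c →
      2*s + b + 2*c = 2^t - 1 → c = 0 ∧ s < 2^(t-1)) := by
  intro t
  induction t with
  | zero => omega
  | succ t ih =>
    intro _
    rcases Nat.eq_zero_or_pos t with ht0 | ht0
    · subst ht0
      constructor
      · intro s b c hbs hcs hbc heq
        norm_num at heq ⊢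
        omega
      · intro s b c hbs hcs hbc heq
        norm_num at heq ⊢
        have hs : s % 2 = 1 := by have := hbs 0; simp only [bit_zero] at this; omega
        omega
    obtain ⟨ihK, ihL⟩ := ih ht0
    have h2 : (2:ℕ)^(t+1) = 2 * 2^t := by ring
    have h2' : (2:ℕ)^t = 2 * 2^(t-1) := by
      conv_lhs => rw [show t = (t-1)+1 by omega]
      ring
    have hp : (2:ℕ) ≤ 2^t := by
      calc (2:ℕ) = 2^1 := by norm_num
      _ ≤ 2^t := Nat.pow_le_pow_right (by norm_num) ht0
    constructor
    · -- K(t+1) : M = 2^(t+1) - 2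
      intro s b c hbs hcs hbc heq
      have hb : b % 2 = 0 := by omega
      rcases Nat.mod_two_eq_zero_or_one s with hs | hs
      · -- s even ⟹ c even, halve to L(t)
        have hc : c % 2 = 0 := by have := hcs 0; simp only [bit_zero] at this; omega
        have := ihL (s/2) (b/2) (c/2) hbs.div2 hcs.div2 hbc.div2 (by omega)
        have hst : (2:ℕ)^(t+1-1) = 2^t := by rw [Nat.add_sub_cancel]
        constructor
        · omega
        · omega
      · rcases Nat.mod_two_eq_zero_or_one c with hc | hc
        · -- c even : halve to K(t)
          have := ihK (s/2) (b/2) (c/2) hbs.div2 hcs.div2 hbc.div2 (by omega)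
          have hst : (2:ℕ)^(t+1-1) = 2^t := by rw [Nat.add_sub_cancel]
          constructor
          · omega
          · omega
        · -- c odd : contradiction via N(t) (or small case)
          exfalso
          rcases Nat.lt_or_ge t 2 with ht2 | ht2
          · have ht1 : t = 1 := by omega
            subst ht1
            omega
          · exact lemN t ht2 (s/2) (b/2) (c/2) hbs.div2 hcs.div2 hbc.div2 (by omega)
    · -- L(t+1) : M = 2^(t+1) - 1
      intro s b c hbs hcs hbc heq
      have hb : b % 2 = 1 := by omega
      have hs : s % 2 = 1 := by have := hbs 0; simp only [bit_zero] at this; omega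
      have hc : c % 2 = 0 := by have := hbc 0; simp only [bit_zero] at this; omega
      have := ihK (s/2) (b/2) (c/2) hbs.div2 hcs.div2 hbc.div2 (by omega)
      have hst : (2:ℕ)^(t+1-1) = 2^t := by rw [Nat.add_sub_cancel]
      constructor
      · omega
      · omega

/-- Main combinatorial claim -/
lemma lemMain : ∀ i t : ℕ, i + 1 ≤ t → ∀ s b c : ℕ, Sub b s → Sub c s → Dis b c →
    2*s + b + 2*c = 2^t + 2^i - 3 → c = 0 ∧ s < 2^(t-1) := by
  intro i
  induction i with
  | zero =>
    intro t ht s b c hbs hcs hbc heq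
    have hp : (2:ℕ) ≤ 2^t := by
      calc (2:ℕ) = 2^1 := by norm_num
      _ ≤ 2^t := Nat.pow_le_pow_right (by norm_num) ht
    exact (lemKL t ht).1 s b c hbs hcs hbc (by omega)
  | succ i ih =>
    intro t ht s b c hbs hcs hbc heq
    have h2 : (2:ℕ)^t = 2 * 2^(t-1) := by
      conv_lhs => rw [show t = (t-1)+1 by omega]
      ring
    have h2i : (2:ℕ)^(i+1) = 2 * 2^i := by ring
    have hpi : (1:ℕ) ≤ 2^i := Nat.one_le_two_pow
    have hpt : (2:ℕ)^(i+1) ≤ 2^(t-1) := Nat.pow_le_pow_right (by norm_num) (by omega)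
    have hb : b % 2 = 1 := by omega
    have hs : s % 2 = 1 := by have := hbs 0; simp only [bit_zero] at this; omega
    have hc : c % 2 = 0 := by have := hbc 0; simp only [bit_zero] at this; omega
    have := ih (t-1) (by omega) (s/2) (b/2) (c/2) hbs.div2 hcs.div2 hbc.div2 (by omega)
    obtain ⟨hc0, hslt⟩ := this
    constructor
    · omega
    · have h3 : (2:ℕ)^(t-1) = 2 * 2^(t-1-1) := by
        conv_lhs => rw [show t-1 = (t-1-1)+1 by omega]
        ring
      omega




lemma pascal_bc (b c : ℕ) (h : 1 ≤ b + c) :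
    (b+c).choose b =
      (if 0 < b then (b+c-1).choose (b-1) else 0) +
      (if 0 < c then (b+c-1).choose b else 0) := by
  match b, c with
  | 0, 0 => omega
  | Nat.succ b, 0 => simp [Nat.choose_self]
  | 0, Nat.succ c => simp
  | Nat.succ b, Nat.succ c =>
    simp only [if_pos (Nat.succ_pos b), if_pos (Nat.succ_pos c)]
    have e : b + 1 + (c + 1) - 1 = b + (c+1) := by omega
    rw [e, show b + 1 + (c + 1) = (b + (c+1)) + 1 by omega, Nat.choose_succ_succ]
    congr 1

lemma pascal_a (s a : ℕ) :
    (s+1).choose a = (if 0 < a then s.choose (a-1) else 0) + s.choose a := by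
  match a with
  | 0 => simp
  | Nat.succ a => simp [Nat.choose_succ_succ]

lemma mlt_rec (a b c : ℕ) (h : 1 ≤ a + b + c) :
    mlt a b c =
      (if 0 < a then mlt (a-1) b c else 0) +
      (if 0 < b then mlt a (b-1) c else 0) +
      (if 0 < c then mlt a b (c-1) else 0) := by
  unfold mlt
  obtain ⟨s, hs⟩ : ∃ s, a + b + c = s + 1 := ⟨a+b+c-1, by omega⟩
  rw [hs, pascal_a s a]
  rcases Nat.eq_zero_or_pos (b + c) with hbc | hbc
  · -- b = c = 0, a = s+1
    have hb : b = 0 := by omega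
    have hc : c = 0 := by omega
    subst hb; subst hc
    have ha : a = s + 1 := by omega
    subst ha
    simp [Nat.choose_succ_self]
  · have key : s.choose a * (b+c).choose b =
        (if 0 < b then (a + (b-1) + c).choose a * ((b-1)+c).choose (b-1) else 0) +
        (if 0 < c then (a + b + (c-1)).choose a * (b+(c-1)).choose b else 0) := by
      rw [pascal_bc b c hbc]
      have e1 : 0 < b → a + (b-1) + c = s ∧ (b-1) + c = b + c - 1 := by omega
      have e2 : 0 < c → a + b + (c-1) = s ∧ b + (c-1) = b + c - 1 := by omega
      rcases Nat.eq_zero_or_pos b with hb | hb <;> rcases Nat.eq_zero_or_pos c with hc | hc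
      · omega
      · simp only [if_neg (by omega : ¬ 0 < b), if_pos hc, (e2 hc).1, (e2 hc).2]
        ring
      · simp only [if_pos hb, if_neg (by omega : ¬ 0 < c), (e1 hb).1, (e1 hb).2]
        ring
      · simp only [if_pos hb, if_pos hc, (e1 hb).1, (e1 hb).2, (e2 hc).1, (e2 hc).2]
        ring
    rw [add_mul, key]
    have e3 : 0 < a → a - 1 + b + c = s := by omega
    rcases Nat.eq_zero_or_pos a with ha | ha
    · simp [ha]
    · simp only [if_pos ha, e3 ha]
      ring




lemma fin3_eq_zero (d : Fin 3 →₀ ℕ) (g0 : d 0 = 0) (g1 : d 1 = 0) (g2 : d 2 = 0) :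
    d = 0 := by
  ext x
  fin_cases x <;> simpa

lemma coeff_g (g : ℤ → MvPolynomial (Fin 3) (ZMod 2))
    (hneg : ∀ r : ℤ, -3 ≤ r → r < 0 → g r = 0)
    (h0 : g 0 = 1)
    (hrec : ∀ r : ℤ, 1 ≤ r →
      g r = X 0 * g (r - 2) + X 1 * g (r - 3) + X 2 * g (r - 4)) :
    ∀ n : ℕ, ∀ d : Fin 3 →₀ ℕ,
      coeff d (g n) =
        if 2 * d 0 + 3 * d 1 + 4 * d 2 = n then (mlt (d 0) (d 1) (d 2) : ZMod 2) else 0 := by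
  intro n
  induction n using Nat.strong_induction_on with
  | _ n ih =>
    intro d
    rcases Nat.eq_zero_or_pos n with hn | hn
    · subst hn
      rw [Nat.cast_zero, h0, coeff_one]
      by_cases hd : (0 : Fin 3 →₀ ℕ) = d
      · have h0' : d 0 = 0 ∧ d 1 = 0 ∧ d 2 = 0 := by rw [← hd]; simp
        rw [if_pos hd, if_pos (by omega), h0'.1, h0'.2.1, h0'.2.2]
        simp [mlt]
      · rw [if_neg hd, if_neg ?_]
        intro hc
        exact hd (fin3_eq_zero d (by omega) (by omega) (by omega)).symm
    · rw [hrec n (by exact_mod_cast hn), coeff_add, coeff_add]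
      have hterm : ∀ (j : Fin 3) (k : ℕ), 2 ≤ k → k ≤ 4 →
          (∀ a0 a1 a2 : ℕ, (2 * a0 + 3 * a1 + 4 * a2 = n - k ∧ k ≤ n ↔
            2 * (a0 + (if (0:Fin 3) = j then 1 else 0)) +
            3 * (a1 + (if (1:Fin 3) = j then 1 else 0)) +
            4 * (a2 + (if (2:Fin 3) = j then 1 else 0)) = n)) →
          coeff d (X j * g ((n:ℤ) - (k:ℤ))) =
            if 2 * d 0 + 3 * d 1 + 4 * d 2 = n ∧ 0 < d j then
              (mlt ((d - Finsupp.single j 1 : Fin 3 →₀ ℕ) 0)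
                ((d - Finsupp.single j 1 : Fin 3 →₀ ℕ) 1)
                ((d - Finsupp.single j 1 : Fin 3 →₀ ℕ) 2) : ZMod 2)
            else 0 := by
        intro j k hk2 hk4 hcond
        rw [coeff_X_mul']
        by_cases hdj : j ∈ d.support
        · rw [if_pos hdj]
          have hdj' : 0 < d j := Nat.pos_of_ne_zero (Finsupp.mem_support_iff.mp hdj)
          set e : Fin 3 →₀ ℕ := d - Finsupp.single j 1 with he
          have hej : e j = d j - 1 := by
            rw [he, Finsupp.tsub_apply, Finsupp.single_apply, if_pos rfl]
          have hej' : ∀ x : Fin 3, ¬ (x = j) → e x = d x := by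
            intro x hx
            rw [he, Finsupp.tsub_apply, Finsupp.single_apply,
              if_neg (fun h => hx h.symm)]
            omega
          have hde0 : d 0 = e 0 + (if (0:Fin 3) = j then 1 else 0) := by
            by_cases h : (0:Fin 3) = j
            · rw [if_pos h]; subst h; omega
            · rw [if_neg h, hej' 0 h]; omega
          have hde1 : d 1 = e 1 + (if (1:Fin 3) = j then 1 else 0) := by
            by_cases h : (1:Fin 3) = j
            · rw [if_pos h]; subst h; omega
            · rw [if_neg h, hej' 1 h]; omega
          have hde2 : d 2 = e 2 + (if (2:Fin 3) = j then 1 else 0) := by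
            by_cases h : (2:Fin 3) = j
            · rw [if_pos h]; subst h; omega
            · rw [if_neg h, hej' 2 h]; omega
          by_cases hnk : k ≤ n
          · have hcast : ((n:ℤ) - k) = ((n - k : ℕ) : ℤ) := by push_cast; omega
            rw [hcast, ih (n - k) (by omega)]
            rw [hde0, hde1, hde2]
            by_cases hcc : 2 * e 0 + 3 * e 1 + 4 * e 2 = n - k
            · rw [if_pos hcc,
                if_pos ⟨((hcond (e 0) (e 1) (e 2)).mp ⟨hcc, hnk⟩), by omega⟩]
            · rw [if_neg hcc, if_neg ?_]
              rintro ⟨hsum, -⟩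
              exact hcc (((hcond (e 0) (e 1) (e 2)).mpr hsum).1)
          · have hg : g ((n:ℤ) - k) = 0 := by
              apply hneg <;> push_cast <;> omega
            rw [hg, coeff_zero, if_neg ?_]
            rintro ⟨hsum, -⟩
            refine hnk ((hcond (e 0) (e 1) (e 2)).mpr ?_).2
            rw [← hde0, ← hde1, ← hde2]
            exact hsum
        · rw [if_neg hdj, if_neg ?_]
          rintro ⟨-, hj⟩
          exact hdj (Finsupp.mem_support_iff.mpr (by omega))
      have T0 := hterm 0 2 (by norm_num) (by norm_num)
        (fun a0 a1 a2 => by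
          rw [if_pos rfl, if_neg (by decide), if_neg (by decide)]; omega)
      have T1 := hterm 1 3 (by norm_num) (by norm_num)
        (fun a0 a1 a2 => by
          rw [if_neg (by decide), if_pos rfl, if_neg (by decide)]; omega)
      have T2 := hterm 2 4 (by norm_num) (by norm_num)
        (fun a0 a1 a2 => by
          rw [if_neg (by decide), if_neg (by decide), if_pos rfl]; omega)
      rw [show ((2:ℕ):ℤ) = (2:ℤ) by norm_num] at T0
      rw [show ((3:ℕ):ℤ) = (3:ℤ) by norm_num] at T1
      rw [show ((4:ℕ):ℤ) = (4:ℤ) by norm_num] at T2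
      rw [T0, T1, T2]
      have hs0 : (d - Finsupp.single (0:Fin 3) 1 : Fin 3 →₀ ℕ) 0 = d 0 - 1 ∧
          (d - Finsupp.single (0:Fin 3) 1 : Fin 3 →₀ ℕ) 1 = d 1 ∧
          (d - Finsupp.single (0:Fin 3) 1 : Fin 3 →₀ ℕ) 2 = d 2 := by
        refine ⟨?_, ?_, ?_⟩ <;>
          rw [Finsupp.tsub_apply, Finsupp.single_apply] <;> simp
      have hs1 : (d - Finsupp.single (1:Fin 3) 1 : Fin 3 →₀ ℕ) 0 = d 0 ∧
          (d - Finsupp.single (1:Fin 3) 1 : Fin 3 →₀ ℕ) 1 = d 1 - 1 ∧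
          (d - Finsupp.single (1:Fin 3) 1 : Fin 3 →₀ ℕ) 2 = d 2 := by
        refine ⟨?_, ?_, ?_⟩ <;>
          rw [Finsupp.tsub_apply, Finsupp.single_apply] <;> simp
      have hs2 : (d - Finsupp.single (2:Fin 3) 1 : Fin 3 →₀ ℕ) 0 = d 0 ∧
          (d - Finsupp.single (2:Fin 3) 1 : Fin 3 →₀ ℕ) 1 = d 1 ∧
          (d - Finsupp.single (2:Fin 3) 1 : Fin 3 →₀ ℕ) 2 = d 2 - 1 := by
        refine ⟨?_, ?_, ?_⟩ <;>
          rw [Finsupp.tsub_apply, Finsupp.single_apply] <;> simp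
      rw [hs0.1, hs0.2.1, hs0.2.2, hs1.1, hs1.2.1, hs1.2.2, hs2.1, hs2.2.1, hs2.2.2]
      by_cases hc : 2 * d 0 + 3 * d 1 + 4 * d 2 = n
      · rw [if_pos hc]
        have h1 : 1 ≤ d 0 + d 1 + d 2 := by omega
        rw [mlt_rec _ _ _ h1]
        push_cast
        by_cases ha : 0 < d 0 <;> by_cases hb : 0 < d 1 <;> by_cases hcc : 0 < d 2 <;>
          simp [ha, hb, hcc, hc]
      · rw [if_neg hc]
        simp [hc]


end Stmt11

open MvPolynomial Stmt11 in
/-- For `t ≥ 3` and `0 ≤ i ≤ t-1`, the leading monomial of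
`g_{2^t - 3 + 2^i}` with respect to the lexicographic order with `w₃ < w₂ < w₄`
(compare the `w₄`-exponent first, then `w₂`, then `w₃`) is `w₂^{2^{t-1}-2^i} w₃^{2^i-1}`:
this monomial has coefficient `1` and every exponent vector in the support is
lexicographically `≤` it. (Here `X 0 = w₂`, `X 1 = w₃`, `X 2 = w₄`.) -/
theorem stmt_11 (t : ℕ) (ht : 3 ≤ t)
    (g : ℤ → MvPolynomial (Fin 3) (ZMod 2))
    (hneg : ∀ r : ℤ, -3 ≤ r → r < 0 → g r = 0)
    (h0 : g 0 = 1)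
    (hrec : ∀ r : ℤ, 1 ≤ r →
      g r = X 0 * g (r - 2) + X 1 * g (r - 3) + X 2 * g (r - 4)) :
    ∀ i : ℕ, i ≤ t - 1 →
      coeff (Finsupp.single 0 (2 ^ (t - 1) - 2 ^ i) + Finsupp.single 1 (2 ^ i - 1))
        (g ((2 : ℤ) ^ t - 3 + 2 ^ i)) = 1 ∧
      ∀ d ∈ (g ((2 : ℤ) ^ t - 3 + 2 ^ i)).support,
        d 2 < 0 ∨
        (d 2 = 0 ∧ (d 0 < 2 ^ (t - 1) - 2 ^ i ∨
          (d 0 = 2 ^ (t - 1) - 2 ^ i ∧ d 1 ≤ 2 ^ i - 1))) := by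
  intro i hi
  have h2t : (2:ℕ)^t = 2 * 2^(t-1) := by
    conv_lhs => rw [show t = (t-1)+1 by omega]
    ring
  have h2i1 : (1:ℕ) ≤ 2^i := Nat.one_le_two_pow
  have h2it : (2:ℕ)^i ≤ 2^(t-1) := Nat.pow_le_pow_right (by norm_num) (by omega)
  have h8 : (8:ℕ) ≤ 2^t := by
    calc (8:ℕ) = 2^3 := by norm_num
    _ ≤ 2^t := Nat.pow_le_pow_right (by norm_num) ht
  set n : ℕ := 2^t + 2^i - 3 with hn
  have hcast : ((2:ℤ)^t - 3 + 2^i) = (n : ℤ) := by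
    rw [hn, Nat.cast_sub (by omega)]
    push_cast
    ring
  rw [hcast]
  have hformula := coeff_g g hneg h0 hrec n
  constructor
  · rw [hformula]
    have hd0 : (Finsupp.single (0:Fin 3) (2^(t-1) - 2^i) +
        Finsupp.single (1:Fin 3) (2^i - 1) : Fin 3 →₀ ℕ) 0 = 2^(t-1) - 2^i := by
      simp [Finsupp.single_apply]
    have hd1 : (Finsupp.single (0:Fin 3) (2^(t-1) - 2^i) +
        Finsupp.single (1:Fin 3) (2^i - 1) : Fin 3 →₀ ℕ) 1 = 2^i - 1 := by
      simp [Finsupp.single_apply]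
    have hd2 : (Finsupp.single (0:Fin 3) (2^(t-1) - 2^i) +
        Finsupp.single (1:Fin 3) (2^i - 1) : Fin 3 →₀ ℕ) 2 = 0 := by
      simp [Finsupp.single_apply]
    rw [hd0, hd1, hd2, if_pos (by omega)]
    have hml : mlt (2^(t-1) - 2^i) (2^i - 1) 0 % 2 = 1 := by
      unfold mlt
      have e1 : 2^(t-1) - 2^i + (2^i - 1) + 0 = 2^(t-1) - 1 := by omega
      have e2 : 2^i - 1 + 0 = 2^i - 1 := by omega
      rw [e1, e2, Nat.choose_self, mul_one]
      exact choose_two_pow_sub_one (t-1) _ (by omega)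
    rw [← ZMod.natCast_mod, hml, Nat.cast_one]
  · intro d hd
    have hne := MvPolynomial.mem_support_iff.mp hd
    rw [hformula d] at hne
    by_cases hcond : 2 * d 0 + 3 * d 1 + 4 * d 2 = n
    swap
    · rw [if_neg hcond] at hne; exact absurd rfl hne
    rw [if_pos hcond] at hne
    have hodd : mlt (d 0) (d 1) (d 2) % 2 = 1 := by
      have h2d : ¬ (2 ∣ mlt (d 0) (d 1) (d 2)) := by
        intro hdvd
        exact hne ((ZMod.natCast_eq_zero_iff _ 2).mpr hdvd)
      omega
    unfold mlt at hodd
    obtain ⟨ho1, ho2⟩ := odd_of_mul_odd hodd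
    have hab : Dis (d 0) (d 1 + d 2) := by
      refine choose_odd_dis (d 0 + (d 1 + d 2)) (d 0) (d 1 + d 2) rfl ?_
      rw [← add_assoc]
      exact ho1
    have hbc : Dis (d 1) (d 2) := choose_odd_dis (d 1 + d 2) (d 1) (d 2) rfl ho2
    set s : ℕ := d 0 + (d 1 + d 2) with hs
    have hbit : ∀ j, bit j s = bit j (d 0) + bit j (d 1) + bit j (d 2) := by
      intro j
      rw [hs, bit_add_of_dis j hab, bit_add_of_dis j hbc]
      ring
    have hsb : Sub (d 1) s := fun j => by rw [hbit j]; omega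
    have hsc : Sub (d 2) s := fun j => by rw [hbit j]; omega
    have hmain := lemMain i t (by omega) s (d 1) (d 2) hsb hsc hbc (by omega)
    obtain ⟨hc0, hslt⟩ := hmain
    right
    refine ⟨hc0, ?_⟩
    omega
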